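/- arXiv:2101.12468 — 4 statements merged into one kernel-verified Lean document; each statement's English description precedes it below -/
import Mathlib

section
/- An injective partial map α on {1,…,n} is an injective partial endomorphism of the path P_n (i.e., for all u,v in the domain of α, if |u−v|=1 then |α(u)−α(v)|=1) if and only if for each interval I of the domain of α, the image α(I) is an interval of the image of α. -/
open scoped Classical

/-- `adj u v` means `|u - v| = 1`, i.e. `u` and `v` are adjacent in the path. -/
def adj (u v : ℕ) : Prop := u + 1 = v ∨ v + 1 = u

/-- `f` is an injective partial endomorphism of the path `P_n` on `{1,…,n}`. -/
structure IsIEnd (n : ℕ) (f : ℕ →. ℕ) : Prop where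
  dom_subset : f.Dom ⊆ Set.Icc 1 n
  ran_subset : f.ran ⊆ Set.Icc 1 n
  inj : ∀ ⦃x y a : ℕ⦄, a ∈ f x → a ∈ f y → x = y
  edge : ∀ ⦃u v a b : ℕ⦄, a ∈ f u → b ∈ f v → adj u v → adj a b

/-- `f` is a partial automorphism of the path `P_n`. -/
def IsPAut (n : ℕ) (f : ℕ →. ℕ) : Prop :=
  IsIEnd n f ∧ ∀ ⦃u v a b : ℕ⦄, a ∈ f u → b ∈ f v → adj a b → adj u v

/-- Left-to-right composition of partial maps: `x (pcomp f g) = (x f) g`. -/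
def pcomp (f g : ℕ →. ℕ) : ℕ →. ℕ := PFun.comp g f

/-- The inverse of an injective partial map. -/
noncomputable def pinv (f : ℕ →. ℕ) : ℕ →. ℕ :=
  fun y => ⟨∃ x, y ∈ f x, fun h => h.choose⟩

/-- `I` is an interval of `X`: a set of consecutive integers contained in `X`. -/
def IsIntervalOf (I X : Set ℕ) : Prop :=
  I ⊆ X ∧ ∀ ⦃x⦄, x ∈ I → ∀ ⦃y⦄, y ∈ I → ∀ ⦃z : ℕ⦄, x < z → z < y → z ∈ I

/-- `I` is a maximal interval of `X`. -/
def IsMaxIntervalOf (I X : Set ℕ) : Prop :=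
  IsIntervalOf I X ∧ ∀ J, IsIntervalOf J X → I ⊆ J → I = J

lemma run_lemma (f : ℕ →. ℕ)
    (hinj : ∀ ⦃x y a : ℕ⦄, a ∈ f x → a ∈ f y → x = y)
    (hedge : ∀ ⦃u v a b : ℕ⦄, a ∈ f u → b ∈ f v → adj u v → adj a b)
    (x : ℕ) (a0 : ℕ) (ha0 : a0 ∈ f x) (k : ℕ)
    (hall : ∀ j ≤ k, ∃ c, c ∈ f (x + j)) :
    (∀ j ≤ k, a0 + j ∈ f (x + j)) ∨ (∀ j ≤ k, ∃ c, c ∈ f (x + j) ∧ c + j = a0) := by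
  induction k with
  | zero =>
    left; intro j hj
    have : j = 0 := Nat.le_zero.mp hj
    subst this; simpa using ha0
  | succ k ih =>
    have ih' := ih (fun j hj => hall j (hj.trans (Nat.le_succ k)))
    obtain ⟨d, hd⟩ := hall (k + 1) le_rfl
    rcases ih' with hinc | hdec
    · have hk : a0 + k ∈ f (x + k) := hinc k le_rfl
      have hadj : adj (a0 + k) d := hedge hk hd (Or.inl (by ring))
      rcases hadj with h1 | h2
      · left; intro j hj
        rcases Nat.lt_or_ge j (k + 1) with h | h
        · exact hinc j (Nat.lt_succ_iff.mp h)
        · have : j = k + 1 := le_antisymm hj h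
          subst this
          have : a0 + (k + 1) = d := by omega
          rwa [this]
      · rcases Nat.eq_zero_or_pos k with hk0 | hkpos
        · subst hk0
          right; intro j hj
          interval_cases j
          · exact ⟨a0, by simpa using ha0, by omega⟩
          · exact ⟨d, hd, by omega⟩
        · exfalso
          have hk1 : a0 + (k - 1) ∈ f (x + (k - 1)) := hinc (k - 1) (by omega)
          have hde : d = a0 + (k - 1) := by omega
          rw [hde] at hd
          have := hinj hd hk1
          omega
    · obtain ⟨c, hc, hck⟩ := hdec k le_rfl
      have hadj : adj c d := hedge hc hd (Or.inl (by ring))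
      rcases hadj with h1 | h2
      · rcases Nat.eq_zero_or_pos k with hk0 | hkpos
        · subst hk0
          left; intro j hj
          interval_cases j
          · simpa using ha0
          · have : a0 + 1 = d := by omega
            rwa [this]
        · exfalso
          obtain ⟨c', hc', hc'k⟩ := hdec (k - 1) (by omega)
          have : c' = d := by omega
          subst this
          have := hinj hd hc'
          omega
      · right; intro j hj
        rcases Nat.lt_or_ge j (k + 1) with h | h
        · exact hdec j (Nat.lt_succ_iff.mp h)
        · have : j = k + 1 := le_antisymm hj h
          subst this
          exact ⟨d, hd, by omega⟩

theorem stmt0 (n : ℕ) (f : ℕ →. ℕ)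
    (hdom : f.Dom ⊆ Set.Icc 1 n) (hran : f.ran ⊆ Set.Icc 1 n)
    (hinj : ∀ ⦃x y a : ℕ⦄, a ∈ f x → a ∈ f y → x = y) :
    IsIEnd n f ↔
      ∀ I : Set ℕ, IsIntervalOf I f.Dom → IsIntervalOf (f.image I) f.ran := by
  constructor
  · intro hf I hI
    constructor
    · rintro b hb
      obtain ⟨x, hx, hbx⟩ := (PFun.mem_image f b I).mp hb
      exact ⟨x, hbx⟩
    · intro a ha b hb c hac hcb
      obtain ⟨x, hxI, hax⟩ := (PFun.mem_image f a I).mp ha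
      obtain ⟨y, hyI, hby⟩ := (PFun.mem_image f b I).mp hb
      have hxy : x ≠ y := by
        intro h; subst h
        have := Part.mem_unique hax hby
        omega
      -- all points between min and max are in I
      have hmid : ∀ z, min x y ≤ z → z ≤ max x y → z ∈ I := by
        intro z h1 h2
        rcases eq_or_lt_of_le h1 with h | h
        · rcases min_cases x y with ⟨he, _⟩ | ⟨he, _⟩ <;> simp [← h, he, hxI, hyI]
        rcases eq_or_lt_of_le h2 with h' | h'
        · rcases max_cases x y with ⟨he, _⟩ | ⟨he, _⟩ <;> simp [h', he, hxI, hyI]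
        rcases le_total x y with hle | hle
        · exact hI.2 hxI hyI (by omega) (by omega)
        · exact hI.2 hyI hxI (by omega) (by omega)
      rcases Nat.lt_or_ge x y with hlt | hge
      · have hall : ∀ j ≤ y - x, ∃ c, c ∈ f (x + j) := by
          intro j hj
          have : x + j ∈ I := hmid (x + j) (by omega) (by omega)
          obtain ⟨c, hc⟩ := (PFun.mem_dom f (x + j)).mp (hI.1 this)
          exact ⟨c, hc⟩
        rcases run_lemma f hinj hf.edge x a hax (y - x) hall with hup | hdn
        · have hb' : a + (y - x) ∈ f y := by
            have := hup (y - x) le_rfl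
            rwa [show x + (y - x) = y by omega] at this
          have hba : b = a + (y - x) := Part.mem_unique hby hb'
          have hjle : c - a ≤ y - x := by omega
          have hcm : c ∈ f (x + (c - a)) := by
            have := hup (c - a) hjle
            rwa [show a + (c - a) = c by omega] at this
          exact (PFun.mem_image f c I).mpr ⟨x + (c - a), hmid _ (by omega) (by omega), hcm⟩
        · exfalso
          obtain ⟨c', hc', hc'e⟩ := hdn (y - x) le_rfl
          rw [show x + (y - x) = y by omega] at hc'
          have := Part.mem_unique hby hc'
          omega
      · have hlt : y < x := by omega
        have hall : ∀ j ≤ x - y, ∃ c, c ∈ f (y + j) := by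
          intro j hj
          have : y + j ∈ I := hmid (y + j) (by omega) (by omega)
          obtain ⟨c, hc⟩ := (PFun.mem_dom f (y + j)).mp (hI.1 this)
          exact ⟨c, hc⟩
        rcases run_lemma f hinj hf.edge y b hby (x - y) hall with hup | hdn
        · exfalso
          have ha' : b + (x - y) ∈ f x := by
            have := hup (x - y) le_rfl
            rwa [show y + (x - y) = x by omega] at this
          have := Part.mem_unique hax ha'
          omega
        · obtain ⟨c', hc', hc'e⟩ := hdn (x - y) le_rfl
          rw [show y + (x - y) = x by omega] at hc'
          have hae : c' = a := Part.mem_unique hc' hax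
          -- so a + (x - y) = b
          have hab : a + (x - y) = b := by omega
          obtain ⟨c'', hc'', hc''e⟩ := hdn (b - c) (by omega)
          exact (PFun.mem_image f c I).mpr ⟨y + (b - c), hmid _ (by omega) (by omega), by
            rwa [show c'' = c by omega] at hc''⟩
  · intro h
    refine ⟨hdom, hran, hinj, ?_⟩
    intro u v a b ha hb huv
    have hab : a ≠ b := by
      intro he; subst he
      have := hinj ha hb
      rcases huv with h1 | h1 <;> omega
    by_contra hnadj
    -- WLOG set up I = {u, v}
    have hI : IsIntervalOf {u, v} f.Dom := by
      constructor
      · rintro z (rfl | rfl)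
        · exact (PFun.mem_dom f _).mpr ⟨a, ha⟩
        · exact (PFun.mem_dom f _).mpr ⟨b, hb⟩
      · rintro x (rfl | rfl) y (rfl | rfl) z h1 h2 <;> rcases huv with hu | hu <;> omega
    have him := h _ hI
    have haI : a ∈ f.image {u, v} := (PFun.mem_image f a _).mpr ⟨u, Or.inl rfl, ha⟩
    have hbI : b ∈ f.image {u, v} := (PFun.mem_image f b _).mpr ⟨v, Or.inr rfl, hb⟩
    have key : ∀ c, c ∈ f.image {u, v} → c = a ∨ c = b := by
      intro c hc
      obtain ⟨z, hz, hcz⟩ := (PFun.mem_image f c _).mp hc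
      rcases hz with rfl | rfl
      · exact Or.inl (Part.mem_unique hcz ha)
      · exact Or.inr (Part.mem_unique hcz hb)
    rcases Nat.lt_or_ge a b with hl | hl
    · have hmem := him.2 haI hbI (z := a + 1) (by omega) (by
        simp only [adj] at hnadj; omega)
      rcases key _ hmem with h' | h' <;> simp only [adj] at hnadj <;> omega
    · have hl' : b < a := by omega
      have hmem := him.2 hbI haI (z := b + 1) (by omega) (by
        simp only [adj] at hnadj; omega)
      rcases key _ hmem with h' | h' <;> simp only [adj] at hnadj <;> omega
end

section
/- If α is an injective partial endomorphism of the path P_n and I is an interval contained in the domain of α, then the restriction of α to I is either order-preserving or order-reversing. -/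
open scoped Classical

theorem stmt1 (n : ℕ) (f : ℕ →. ℕ) (hf : IsIEnd n f) (I : Set ℕ)
    (hI : IsIntervalOf I f.Dom) :
    (∀ ⦃x y a b : ℕ⦄, x ∈ I → y ∈ I → a ∈ f x → b ∈ f y → x < y → a < b) ∨
    (∀ ⦃x y a b : ℕ⦄, x ∈ I → y ∈ I → a ∈ f x → b ∈ f y → x < y → b < a) := by
  -- interval closure under ≤
  have hIc : ∀ ⦃x⦄, x ∈ I → ∀ ⦃y⦄, y ∈ I → ∀ ⦃z : ℕ⦄, x ≤ z → z ≤ y → z ∈ I := by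
    intro x hx y hy z h1 h2
    rcases eq_or_lt_of_le h1 with rfl | h1
    · exact hx
    rcases eq_or_lt_of_le h2 with rfl | h2
    · exact hy
    exact hI.2 hx hy h1 h2
  have hval : ∀ ⦃z⦄, z ∈ I → ∃ c, c ∈ f z := by
    intro z hz
    exact (PFun.mem_dom f z).mp (hI.1 hz)
  have hstep : ∀ ⦃x a b : ℕ⦄, a ∈ f x → b ∈ f (x+1) → b = a + 1 ∨ a = b + 1 := by
    intro x a b ha hb
    rcases hf.edge ha hb (Or.inl rfl) with h | h
    · exact Or.inl h.symm
    · exact Or.inr h.symm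
  -- direction propagation one step
  have propUp : ∀ ⦃x a b c : ℕ⦄, a ∈ f x → b ∈ f (x+1) → b = a + 1 →
      c ∈ f (x+1+1) → c = b + 1 := by
    intro x a b c ha hb hup hc
    rcases hstep hb hc with h | h
    · exact h
    · exfalso
      have hca : c = a := by omega
      subst hca
      have := hf.inj ha hc
      omega
  have propDown : ∀ ⦃x a b c : ℕ⦄, a ∈ f x → b ∈ f (x+1) → a = b + 1 →
      c ∈ f (x+1+1) → b = c + 1 := by
    intro x a b c ha hb hdn hc
    rcases hstep hb hc with h | h
    · exfalso
      have hca : c = a := by omega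
      subst hca
      have := hf.inj ha hc
      omega
    · exact h
  -- propagation along the interval
  have upAll : ∀ x, x ∈ I → (∃ a b, a ∈ f x ∧ b ∈ f (x+1) ∧ b = a+1) →
      ∀ y, x ≤ y → y + 1 ∈ I → ∃ a b, a ∈ f y ∧ b ∈ f (y+1) ∧ b = a+1 := by
    intro x hx hup y hxy
    induction y, hxy using Nat.le_induction with
    | base => intro _; exact hup
    | succ y hy ih =>
      intro hy2
      have hy1 : y + 1 ∈ I := hIc hx hy2 (by omega) (by omega)
      obtain ⟨a, b, ha, hb, hab⟩ := ih hy1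
      obtain ⟨c, hc⟩ := hval hy2
      exact ⟨b, c, hb, hc, propUp ha hb hab hc⟩
  have downAll : ∀ x, x ∈ I → (∃ a b, a ∈ f x ∧ b ∈ f (x+1) ∧ a = b+1) →
      ∀ y, x ≤ y → y + 1 ∈ I → ∃ a b, a ∈ f y ∧ b ∈ f (y+1) ∧ a = b+1 := by
    intro x hx hdn y hxy
    induction y, hxy using Nat.le_induction with
    | base => intro _; exact hdn
    | succ y hy ih =>
      intro hy2
      have hy1 : y + 1 ∈ I := hIc hx hy2 (by omega) (by omega)
      obtain ⟨a, b, ha, hb, hab⟩ := ih hy1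
      obtain ⟨c, hc⟩ := hval hy2
      exact ⟨b, c, hb, hc, propDown ha hb hab hc⟩
  by_cases H : ∃ x, x ∈ I ∧ x + 1 ∈ I ∧ ∃ a b, a ∈ f x ∧ b ∈ f (x+1) ∧ b = a + 1
  · -- all steps up
    obtain ⟨x0, hx0, hx01, hup0⟩ := H
    have allUp : ∀ z, z ∈ I → z + 1 ∈ I → ∃ a b, a ∈ f z ∧ b ∈ f (z+1) ∧ b = a+1 := by
      intro z hz hz1
      obtain ⟨a, ha⟩ := hval hz
      obtain ⟨b, hb⟩ := hval hz1
      rcases hstep ha hb with h | h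
      · exact ⟨a, b, ha, hb, h⟩
      · -- down step at z; propagate to x0, contradiction
        rcases le_or_gt z x0 with hzx | hzx
        · obtain ⟨a', b', ha', hb', hd'⟩ := downAll z hz ⟨a, b, ha, hb, h⟩ x0 hzx hx01
          obtain ⟨a'', b'', ha'', hb'', hu''⟩ := hup0
          have e1 : a' = a'' := Part.mem_unique ha' ha''
          have e2 : b' = b'' := Part.mem_unique hb' hb''
          omega
        · obtain ⟨a', b', ha', hb', hu'⟩ := upAll x0 hx0 hup0 z (by omega) hz1
          have e1 : a' = a := Part.mem_unique ha' ha
          have e2 : b' = b := Part.mem_unique hb' hb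
          omega
    left
    intro x y a b hx hy ha hb hxy
    clear hup0 hx0 hx01
    induction y, hxy using Nat.le_induction generalizing b with
    | base =>
      obtain ⟨a', b', ha', hb', hu'⟩ := allUp x hx (by simpa using hy)
      have e1 : a' = a := Part.mem_unique ha' ha
      have e2 : b' = b := Part.mem_unique hb' hb
      omega
    | succ y hy' ih =>
      have hyI : y ∈ I := hIc hx hy (by omega) (by omega)
      obtain ⟨c, hc⟩ := hval hyI
      have hac : a < c := ih hyI hc
      obtain ⟨a', b', ha', hb', hu'⟩ := allUp y hyI hy
      have e1 : a' = c := Part.mem_unique ha' hc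
      have e2 : b' = b := Part.mem_unique hb' hb
      omega
  · -- all steps down
    have allDown : ∀ z, z ∈ I → z + 1 ∈ I → ∃ a b, a ∈ f z ∧ b ∈ f (z+1) ∧ a = b+1 := by
      intro z hz hz1
      obtain ⟨a, ha⟩ := hval hz
      obtain ⟨b, hb⟩ := hval hz1
      rcases hstep ha hb with h | h
      · exact absurd ⟨z, hz, hz1, a, b, ha, hb, h⟩ H
      · exact ⟨a, b, ha, hb, h⟩
    right
    intro x y a b hx hy ha hb hxy
    induction y, hxy using Nat.le_induction generalizing b with
    | base =>
      obtain ⟨a', b', ha', hb', hd'⟩ := allDown x hx (by simpa using hy)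
      have e1 : a' = a := Part.mem_unique ha' ha
      have e2 : b' = b := Part.mem_unique hb' hb
      omega
    | succ y hy' ih =>
      have hyI : y ∈ I := hIc hx hy (by omega) (by omega)
      obtain ⟨c, hc⟩ := hval hyI
      have hac : c < a := ih hyI hc
      obtain ⟨a', b', ha', hb', hd'⟩ := allDown y hyI hy
      have e1 : a' = c := Part.mem_unique ha' hc
      have e2 : b' = b := Part.mem_unique hb' hb
      omega
end

section
/- If α is a partial automorphism of the path P_n and I is a maximal interval of Dom α, then α(I) is a maximal interval of Im α. -/
open scoped Classical

lemma icc_interval_of (a b : ℕ) (X : Set ℕ) (h : Set.Icc a b ⊆ X) :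
    IsIntervalOf (Set.Icc a b) X :=
  ⟨h, fun x hx y hy z h1 h2 =>
    ⟨le_trans hx.1 (le_of_lt h1), le_trans (le_of_lt h2) hy.2⟩⟩

theorem stmt2 (n : ℕ) (f : ℕ →. ℕ) (hf : IsPAut n f) (I : Set ℕ)
    (hI : IsMaxIntervalOf I f.Dom) :
    IsMaxIntervalOf (f.image I) f.ran := by
  classical
  obtain ⟨⟨hIsub, hIconv⟩, hImax⟩ := hI
  rcases I.eq_empty_or_nonempty with hE | hne
  · subst hE
    have hdom : f.Dom = ∅ := by
      by_contra h
      obtain ⟨x, hx⟩ := Set.nonempty_iff_ne_empty.2 h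
      have hsing : IsIntervalOf {x} f.Dom := by
        refine ⟨by simpa using hx, ?_⟩
        intro p hp q hq z h1 h2
        simp only [Set.mem_singleton_iff] at hp hq ⊢
        omega
      have heq := hImax {x} hsing (Set.empty_subset _)
      have : x ∈ (∅ : Set ℕ) := by rw [heq]; rfl
      exact this
    have hran : f.ran = ∅ := by
      ext y
      simp only [Set.mem_empty_iff_false, iff_false]
      rintro ⟨u, hu⟩
      have : u ∈ f.Dom := (PFun.mem_dom f u).2 ⟨y, hu⟩
      rw [hdom] at this
      exact this
    have himg : f.image (∅ : Set ℕ) = ∅ := by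
      ext y
      simp [PFun.mem_image]
    rw [himg, hran]
    exact ⟨⟨Set.Subset.rfl, fun x hx => absurd hx (Set.notMem_empty x)⟩,
      fun J hJ _ => (Set.subset_empty_iff.1 hJ.1).symm⟩
  · -- I nonempty
    set a := sInf I with ha
    have haI : a ∈ I := Nat.sInf_mem hne
    have hbdd : BddAbove I := ⟨n, fun x hx => (hf.1.dom_subset (hIsub hx)).2⟩
    set b := sSup I with hb
    have hbI : b ∈ I := Nat.sSup_mem hne hbdd
    have hab : a ≤ b := Nat.sInf_le hbI
    have hIeq : I = Set.Icc a b := by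
      ext z
      constructor
      · exact fun hz => ⟨Nat.sInf_le hz, le_csSup hbdd hz⟩
      · rintro ⟨h1, h2⟩
        rcases eq_or_lt_of_le h1 with rfl | h1'
        · exact haI
        · rcases eq_or_lt_of_le h2 with rfl | h2'
          · exact hbI
          · exact hIconv haI hbI h1' h2'
    -- the value function
    set g : ℕ → ℕ := fun k => if h : (f k).Dom then (f k).get h else 0 with hgdef
    have hgmem : ∀ k, k ∈ f.Dom → g k ∈ f k := by
      intro k h
      have h' : (f k).Dom := h
      simp only [hgdef]
      split
      · exact Part.get_mem _
      · exact absurd h' (by assumption)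
    have hgI : ∀ k, k ∈ I → g k ∈ f k := fun k hk => hgmem k (hIsub hk)
    have hstep : ∀ k, k ∈ I → k + 1 ∈ I → adj (g k) (g (k + 1)) :=
      fun k h1 h2 => hf.1.edge (hgI k h1) (hgI _ h2) (Or.inl rfl)
    have hginj : ∀ k, k ∈ I → ∀ l, l ∈ I → g k = g l → k = l :=
      fun k hk l hl h => hf.1.inj (h ▸ hgI k hk) (hgI l hl)
    have hmemIcc : ∀ j : ℕ, a + j ≤ b → a + j ∈ I := by
      intro j hj
      rw [hIeq]
      exact ⟨by omega, hj⟩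
    -- the image is an interval [c, d]
    have key : ∃ c d : ℕ, c ≤ d ∧ f.image I = Set.Icc c d := by
      rcases eq_or_lt_of_le hab with heq | hlt
      · refine ⟨g a, g a, le_rfl, ?_⟩
        rw [← heq] at hIeq
        ext y
        simp only [PFun.mem_image, Set.Icc_self, Set.mem_singleton_iff]
        constructor
        · rintro ⟨x, hx, hy⟩
          have hxa : x = a := by
            rw [hIeq] at hx
            simp only [Set.mem_Icc] at hx
            omega
          subst hxa
          exact Part.mem_unique hy (hgI a haI)
        · rintro rfl
          exact ⟨a, haI, hgI a haI⟩
      · have ha1 : a + 1 ∈ I := hmemIcc 1 hlt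
        rcases hstep a haI ha1 with hup | hdn
        · -- increasing case : g (a+1) = g a + 1
          have hmono : ∀ j : ℕ, a + j ≤ b → g (a + j) = g a + j := by
            intro j
            induction j using Nat.strong_induction_on with
            | _ j ih =>
              intro hj
              match j with
              | 0 => simp
              | 1 => omega
              | (k + 2) =>
                have h1 := ih (k + 1) (by omega) (by omega)
                have h0 := ih k (by omega) (by omega)
                have hm1 : a + (k + 1) ∈ I := hmemIcc (k + 1) (by omega)
                have hm2 : a + (k + 2) ∈ I := hmemIcc (k + 2) hj
                rcases hstep (a + (k + 1)) hm1 hm2 with h | h <;>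
                  rw [show a + (k + 1) + 1 = a + (k + 2) from rfl] at h
                · omega
                · exfalso
                  have hgg : g (a + (k + 2)) = g (a + k) := by omega
                  have := hginj _ hm2 _ (hmemIcc k (by omega)) hgg
                  omega
          refine ⟨g a, g a + (b - a), by omega, ?_⟩
          ext y
          simp only [PFun.mem_image, Set.mem_Icc]
          constructor
          · rintro ⟨x, hx, hy⟩
            have hx' : a ≤ x ∧ x ≤ b := by rw [hIeq] at hx; exact hx
            have hyx : y = g x := Part.mem_unique hy (hgI x hx)
            have := hmono (x - a) (by omega)
            rw [show a + (x - a) = x by omega] at this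
            omega
          · rintro ⟨h1, h2⟩
            have := hmono (y - g a) (by omega)
            have hm := hgI _ (hmemIcc (y - g a) (by omega))
            have hyy : g (a + (y - g a)) = y := by omega
            rw [hyy] at hm
            exact ⟨_, hmemIcc _ (by omega), hm⟩
        · -- decreasing case : g a = g (a+1) + 1
          have hmono : ∀ j : ℕ, a + j ≤ b → g (a + j) + j = g a := by
            intro j
            induction j using Nat.strong_induction_on with
            | _ j ih =>
              intro hj
              match j with
              | 0 => simp
              | 1 => omega
              | (k + 2) =>
                have h1 := ih (k + 1) (by omega) (by omega)
                have h0 := ih k (by omega) (by omega)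
                have hm1 : a + (k + 1) ∈ I := hmemIcc (k + 1) (by omega)
                have hm2 : a + (k + 2) ∈ I := hmemIcc (k + 2) hj
                rcases hstep (a + (k + 1)) hm1 hm2 with h | h <;>
                  rw [show a + (k + 1) + 1 = a + (k + 2) from rfl] at h
                · exfalso
                  have hgg : g (a + (k + 2)) = g (a + k) := by omega
                  have := hginj _ hm2 _ (hmemIcc k (by omega)) hgg
                  omega
                · omega
          have hba : g b + (b - a) = g a := by
            have := hmono (b - a) (by omega)
            rwa [show a + (b - a) = b by omega] at this
          refine ⟨g b, g a, by omega, ?_⟩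
          ext y
          simp only [PFun.mem_image, Set.mem_Icc]
          constructor
          · rintro ⟨x, hx, hy⟩
            have hx' : a ≤ x ∧ x ≤ b := by rw [hIeq] at hx; exact hx
            have hyx : y = g x := Part.mem_unique hy (hgI x hx)
            have := hmono (x - a) (by omega)
            rw [show a + (x - a) = x by omega] at this
            omega
          · rintro ⟨h1, h2⟩
            have hjle : g a - y ≤ b - a := by omega
            have := hmono (g a - y) (by omega)
            have hm := hgI _ (hmemIcc (g a - y) (by omega))
            have hyy : g (a + (g a - y)) = y := by omega
            rw [hyy] at hm
            exact ⟨_, hmemIcc _ (by omega), hm⟩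
    obtain ⟨c, d, hcd, hIcc⟩ := key
    have hsubran : f.image I ⊆ f.ran := by
      rintro y ⟨x, _, hy⟩
      exact ⟨x, hy⟩
    -- extension contradiction lemma
    have hext : ∀ u x : ℕ, u ∈ f.Dom → u ∉ I → x ∈ I → adj u x → False := by
      intro u x hu huI hxI hadj
      rw [hIeq] at huI hxI
      simp only [Set.mem_Icc, not_and, not_le] at huI hxI
      have hcase : u + 1 = a ∨ u = b + 1 := by
        rcases hadj with h | h <;> omega
      rcases hcase with h | h
      · have hsub' : Set.Icc u b ⊆ f.Dom := by
          intro z hz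
          simp only [Set.mem_Icc] at hz
          rcases eq_or_lt_of_le hz.1 with rfl | hlt
          · exact hu
          · exact hIsub (by rw [hIeq]; exact ⟨by omega, hz.2⟩)
        have heq := hImax (Set.Icc u b) (icc_interval_of _ _ _ hsub')
          (by rw [hIeq]; exact Set.Icc_subset_Icc (by omega) le_rfl)
        have hmem : u ∈ I := by rw [heq]; exact ⟨le_rfl, by omega⟩
        rw [hIeq] at hmem
        simp only [Set.mem_Icc] at hmem
        omega
      · have hsub' : Set.Icc a u ⊆ f.Dom := by
          intro z hz
          simp only [Set.mem_Icc] at hz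
          rcases eq_or_lt_of_le hz.2 with rfl | hlt
          · exact hu
          · exact hIsub (by rw [hIeq]; exact ⟨hz.1, by omega⟩)
        have heq := hImax (Set.Icc a u) (icc_interval_of _ _ _ hsub')
          (by rw [hIeq]; exact Set.Icc_subset_Icc le_rfl (by omega))
        have hmem : u ∈ I := by rw [heq]; exact ⟨by omega, le_rfl⟩
        rw [hIeq] at hmem
        simp only [Set.mem_Icc] at hmem
        omega
    constructor
    · rw [hIcc]
      exact icc_interval_of _ _ _ (hIcc ▸ hsubran)
    · intro J hJ hsubJ
      refine Set.Subset.antisymm hsubJ fun y hyJ => ?_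
      by_contra hy
      have hcJ : c ∈ J := hsubJ (by rw [hIcc]; exact ⟨le_rfl, hcd⟩)
      have hdJ : d ∈ J := hsubJ (by rw [hIcc]; exact ⟨hcd, le_rfl⟩)
      rw [hIcc] at hy
      simp only [Set.mem_Icc, not_and, not_le] at hy
      by_cases hyd : d < y
      · -- extend above
        have hd1 : d + 1 ∈ J := by
          rcases eq_or_lt_of_le (show d + 1 ≤ y by omega) with h | h
          · rwa [h]
          · exact hJ.2 hdJ hyJ (by omega) h
        obtain ⟨u, hu⟩ := hJ.1 hd1
        have hdI : d ∈ f.image I := by rw [hIcc]; exact ⟨hcd, le_rfl⟩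
        obtain ⟨x, hxI, hdx⟩ := hdI
        have hadj : adj u x := hf.2 hu hdx (Or.inr rfl)
        have huI : u ∉ I := by
          intro h
          have : d + 1 ∈ f.image I := ⟨u, h, hu⟩
          rw [hIcc] at this
          simp only [Set.mem_Icc] at this
          omega
        exact hext u x ((PFun.mem_dom f u).2 ⟨_, hu⟩) huI hxI hadj
      · -- y < c, extend below
        have hyc : y < c := by omega
        have hc1 : 1 ≤ c := by
          have : c ∈ f.ran := hsubran (by rw [hIcc]; exact ⟨le_rfl, hcd⟩)
          exact (hf.1.ran_subset this).1
        have hcm : c - 1 ∈ J := by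
          rcases eq_or_lt_of_le (show y ≤ c - 1 by omega) with h | h
          · rwa [← h]
          · exact hJ.2 hyJ hcJ h (by omega)
        obtain ⟨u, hu⟩ := hJ.1 hcm
        have hcI : c ∈ f.image I := by rw [hIcc]; exact ⟨le_rfl, hcd⟩
        obtain ⟨x, hxI, hcx⟩ := hcI
        have hadj : adj u x := hf.2 hu hcx (Or.inl (by omega))
        have huI : u ∉ I := by
          intro h
          have : c - 1 ∈ f.image I := ⟨u, h, hu⟩
          rw [hIcc] at this
          simp only [Set.mem_Icc] at this
          omega
        exact hext u x ((PFun.mem_dom f u).2 ⟨_, hu⟩) huI hxI hadj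
end

section
/- For n ≥ 3, the monoid IEnd(P_n) of injective partial endomorphisms of the path P_n is not an inverse semigroup; specifically, the partial map sending 1↦1 and 3↦2 (with domain {1,3}) is an injective partial endomorphism that is not a regular element of IEnd(P_n). -/
open scoped Classical

/-- The partial map `1 ↦ 1`, `3 ↦ 2`, with domain `{1,3}`. -/
def beta13 : ℕ →. ℕ := fun x =>
  if x = 1 then Part.some 1 else if x = 3 then Part.some 2 else Part.none

lemma mem_beta13 {x a : ℕ} : a ∈ beta13 x ↔ (x = 1 ∧ a = 1) ∨ (x = 3 ∧ a = 2) := by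
  unfold beta13
  split_ifs with h1 h3 <;>
    simp [h1, Part.mem_some_iff, eq_comm, *]

lemma mem_pcomp {f g : ℕ →. ℕ} {x c : ℕ} :
    c ∈ pcomp f g x ↔ ∃ b, b ∈ f x ∧ c ∈ g b := by
  simp [pcomp, PFun.comp_apply, Part.mem_bind_iff]
  exact Part.mem_bind_iff

theorem stmt4 (n : ℕ) (hn : 3 ≤ n) :
    IsIEnd n beta13 ∧
    ¬ ∃ g : ℕ →. ℕ, IsIEnd n g ∧ pcomp (pcomp beta13 g) beta13 = beta13 := by
  constructor
  · refine ⟨?_, ?_, ?_, ?_⟩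
    · intro x hx
      rcases Part.dom_iff_mem.mp hx with ⟨a, ha⟩
      rcases mem_beta13.mp ha with ⟨rfl, _⟩ | ⟨rfl, _⟩ <;>
        exact ⟨by omega, by omega⟩
    · intro a ha
      rcases ha with ⟨x, hx⟩
      rcases mem_beta13.mp hx with ⟨_, rfl⟩ | ⟨_, rfl⟩ <;>
        exact ⟨by omega, by omega⟩
    · intro x y a hx hy
      rcases mem_beta13.mp hx with ⟨rfl, rfl⟩ | ⟨rfl, rfl⟩ <;>
        rcases mem_beta13.mp hy with ⟨rfl, h⟩ | ⟨rfl, h⟩ <;> omega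
    · intro u v a b hu hv huv
      rcases mem_beta13.mp hu with ⟨rfl, _⟩ | ⟨rfl, _⟩ <;>
        rcases mem_beta13.mp hv with ⟨rfl, _⟩ | ⟨rfl, _⟩ <;>
        rcases huv with h | h <;> omega
  · rintro ⟨g, hg, heq⟩
    have h1 : (1 : ℕ) ∈ beta13 1 := mem_beta13.mpr (Or.inl ⟨rfl, rfl⟩)
    have h3 : (2 : ℕ) ∈ beta13 3 := mem_beta13.mpr (Or.inr ⟨rfl, rfl⟩)
    have e1 : (1 : ℕ) ∈ pcomp (pcomp beta13 g) beta13 1 := heq.symm ▸ h1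
    have e3 : (2 : ℕ) ∈ pcomp (pcomp beta13 g) beta13 3 := heq.symm ▸ h3
    rcases mem_pcomp.mp e1 with ⟨b, hb, hb'⟩
    rcases mem_pcomp.mp hb with ⟨c, hc, hc'⟩
    rcases mem_beta13.mp hc with ⟨_, rfl⟩ | ⟨h, _⟩
    · -- 1 ∈ g 1 since beta13 b = 1 forces b = 1
      rcases mem_beta13.mp hb' with ⟨rfl, _⟩ | ⟨_, h2⟩
      · rcases mem_pcomp.mp e3 with ⟨b', hb3, hb3'⟩
        rcases mem_pcomp.mp hb3 with ⟨c', hc3, hc3'⟩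
        rcases mem_beta13.mp hc3 with ⟨h, _⟩ | ⟨_, rfl⟩
        · omega
        · rcases mem_beta13.mp hb3' with ⟨_, h2⟩ | ⟨rfl, _⟩
          · omega
          · -- 1 ∈ g 1 and 3 ∈ g 2, adj 1 2 → adj 1 3, contradiction
            have := hg.edge hc' hc3' (Or.inl rfl)
            rcases this with h | h <;> omega
      · omega
    · omega
end
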